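/- For every integer n ≥ 4, the image of 𝒩 under the second iterate of the counting operator is s^[2](𝒩) = { x ∈ s(𝒩) | ∑_{j=0}^{n-1} j · x_j = n }; equivalently, s^[2](𝒩) = { x ∈ 𝒩 | ∑_{j=0}^{n-1} x_j = n and ∑_{j=0}^{n-1} j · x_j = n }. -/

import Mathlib

/-- The counting operator: `countOp n x j` is the number of indices `i` with `x i = j`. -/
def countOp (n : ℕ) (x : Fin n → ℕ) : Fin n → ℕ :=
  fun j => (Finset.univ.filter fun i => x i = (j : ℕ)).card

/-- `𝒩`: the set of `n`-chains that are neither constant nor injective. -/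
def NSet (n : ℕ) : Set (Fin n → ℕ) :=
  {x | (∀ i, x i < n) ∧ (¬ ∃ c, ∀ i, x i = c) ∧ ¬ Function.Injective x}

lemma sum_countOp (n : ℕ) (x : Fin n → ℕ) (hx : ∀ i, x i < n) :
    ∑ j : Fin n, countOp n x j = n := by
  classical
  calc ∑ j : Fin n, countOp n x j
      = ∑ j : Fin n, (Finset.univ.filter fun i => (⟨x i, hx i⟩ : Fin n) = j).card := by
        refine Finset.sum_congr rfl fun j _ => ?_
        unfold countOp
        congr 1
        ext i
        simp [Fin.ext_iff]
    _ = (Finset.univ : Finset (Fin n)).card :=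
        (Finset.card_eq_sum_card_fiberwise (fun i _ => Finset.mem_univ _)).symm
    _ = n := by simp

lemma wsum_countOp (n : ℕ) (x : Fin n → ℕ) (hx : ∀ i, x i < n) :
    ∑ j : Fin n, (j : ℕ) * countOp n x j = ∑ i, x i := by
  classical
  rw [← Finset.sum_fiberwise_of_maps_to (g := fun i => (⟨x i, hx i⟩ : Fin n))
      (t := Finset.univ) (fun i _ => Finset.mem_univ _) x]
  refine Finset.sum_congr rfl fun j _ => ?_
  have h : (Finset.univ.filter fun i => (⟨x i, hx i⟩ : Fin n) = j)
      = Finset.univ.filter fun i => x i = (j : ℕ) := by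
    ext i; simp [Fin.ext_iff]
  rw [h, Finset.sum_congr rfl (fun i hi => (Finset.mem_filter.mp hi).2)]
  simp [countOp, mul_comm]

lemma exists_countOp_eq (n : ℕ) (y : Fin n → ℕ) (hy : ∑ j : Fin n, y j = n) :
    ∃ x : Fin n → ℕ, (∀ i, x i < n) ∧ countOp n x = y := by
  classical
  have hcard : Fintype.card (Σ k : Fin n, Fin (y k)) = n := by
    simp [Fintype.card_sigma, hy]
  let e : (Σ k : Fin n, Fin (y k)) ≃ Fin n := Fintype.equivFinOfCardEq hcard
  refine ⟨fun i => ((e.symm i).1 : ℕ), fun i => (e.symm i).1.isLt, ?_⟩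
  funext j
  unfold countOp
  have h1 : (Finset.univ.filter fun i => ((e.symm i).1 : ℕ) = (j : ℕ)).card
      = (Finset.univ.filter fun p : (Σ k : Fin n, Fin (y k)) => (p.1 : ℕ) = (j : ℕ)).card := by
    apply Finset.card_equiv e.symm
    intro i
    simp
  have h2 : (Finset.univ.filter fun p : (Σ k : Fin n, Fin (y k)) => (p.1 : ℕ) = (j : ℕ))
      = ({j} : Finset (Fin n)).sigma (fun k => Finset.univ) := by
    ext p
    simp [Finset.mem_sigma, Fin.ext_iff]
  rw [h1, h2, Finset.card_sigma]
  simp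

lemma countOp_mem_NSet (n : ℕ) (hn : 4 ≤ n) {x : Fin n → ℕ} (hx : x ∈ NSet n) :
    countOp n x ∈ NSet n := by
  classical
  obtain ⟨hlt, hnc, hni⟩ := hx
  have hn0 : 0 < n := by omega
  -- values < n
  have ha : ∀ j, countOp n x j < n := by
    intro j
    by_contra h
    push_neg at h
    have hle : countOp n x j ≤ n := by
      unfold countOp
      calc (Finset.univ.filter fun i => x i = (j : ℕ)).card
          ≤ (Finset.univ : Finset (Fin n)).card := Finset.card_le_card (Finset.filter_subset _ _)
        _ = n := by simp
    have heq : countOp n x j = n := le_antisymm hle h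
    have huniv : (Finset.univ.filter fun i => x i = (j : ℕ)) = Finset.univ := by
      apply Finset.eq_univ_of_card
      simpa [countOp] using heq
    refine hnc ⟨(j : ℕ), fun i => ?_⟩
    have hi : i ∈ (Finset.univ.filter fun i => x i = (j : ℕ)) := by
      rw [huniv]; exact Finset.mem_univ i
    exact (Finset.mem_filter.mp hi).2
  -- not injective witness for x
  rw [Function.not_injective_iff] at hni
  obtain ⟨a, b, hab, hne⟩ := hni
  have hbig : 2 ≤ countOp n x ⟨x a, hlt a⟩ := by
    unfold countOp
    have hsub : ({a, b} : Finset (Fin n)) ⊆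
        Finset.univ.filter fun i => x i = ((⟨x a, hlt a⟩ : Fin n) : ℕ) := by
      intro i hi
      simp only [Finset.mem_insert, Finset.mem_singleton] at hi
      rcases hi with rfl | rfl <;> simp [hab.symm]
    calc 2 = ({a, b} : Finset (Fin n)).card := by rw [Finset.card_insert_of_notMem (by simpa using hne), Finset.card_singleton]
      _ ≤ _ := Finset.card_le_card hsub
  refine ⟨ha, ?_, ?_⟩
  · -- not constant
    rintro ⟨c, hc⟩
    have hsum : ∑ j : Fin n, countOp n x j = n := sum_countOp n x hlt
    rw [Finset.sum_congr rfl (fun j _ => hc j)] at hsum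
    simp only [Finset.sum_const, Finset.card_univ, Fintype.card_fin, smul_eq_mul] at hsum
    have hc1 : c = 1 := by
      have : n * c = n * 1 := by omega
      exact Nat.eq_of_mul_eq_mul_left hn0 this
    rw [hc ⟨x a, hlt a⟩, hc1] at hbig
    omega
  · -- not injective
    intro hinj
    have hbij : Function.Bijective (fun j : Fin n => (⟨countOp n x j, ha j⟩ : Fin n)) := by
      apply Finite.injective_iff_bijective.mp
      intro u v huv
      exact hinj (by simpa [Fin.ext_iff] using huv)
    have hsum : ∑ j : Fin n, countOp n x j = ∑ j : Fin n, (j : ℕ) := by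
      have := Fintype.sum_bijective _ hbij (fun j => countOp n x j) (fun j => (j : ℕ))
        (fun j => rfl)
      simpa using this
    rw [sum_countOp n x hlt] at hsum
    rw [Fin.sum_univ_eq_sum_range (fun i => (i : ℕ)) n] at hsum
    have h2 := Finset.sum_range_id_mul_two n
    rw [← hsum] at h2
    obtain ⟨m, rfl⟩ : ∃ m, n = m + 4 := ⟨n - 4, by omega⟩
    have h3 : m + 4 - 1 = m + 3 := by omega
    rw [h3] at h2
    nlinarith

lemma exists_preimage_NSet (n : ℕ) (hn : 4 ≤ n) {x : Fin n → ℕ} (hx : x ∈ NSet n)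
    (hs : ∑ j : Fin n, x j = n) : ∃ w ∈ NSet n, countOp n w = x := by
  classical
  obtain ⟨hlt, hnc, hni⟩ := hx
  obtain ⟨w, hwlt, hw⟩ := exists_countOp_eq n x hs
  have hn0 : 0 < n := by omega
  refine ⟨w, ⟨hwlt, ?_, ?_⟩, hw⟩
  · -- w not constant
    rintro ⟨c, hc⟩
    have hclt : c < n := hc ⟨0, hn0⟩ ▸ hwlt ⟨0, hn0⟩
    have : countOp n w ⟨c, hclt⟩ = n := by
      unfold countOp
      have : (Finset.univ.filter fun i => w i = c) = Finset.univ := by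
        ext i; simp [hc i]
      simp [this]
    rw [hw] at this
    exact absurd (this ▸ hlt ⟨c, hclt⟩) (by omega)
  · -- w not injective
    intro hinj
    have hone : ∀ j, x j ≤ 1 := by
      intro j
      rw [← hw]
      unfold countOp
      apply Finset.card_le_one.mpr
      intro a ha b hb
      simp only [Finset.mem_filter] at ha hb
      exact hinj (ha.2.trans hb.2.symm)
    have hall : ∀ j, x j = 1 := by
      by_contra h
      push_neg at h
      obtain ⟨j, hj⟩ := h
      have hlt1 : x j < 1 := lt_of_le_of_ne (hone j) hj
      have : ∑ k : Fin n, x k < ∑ k : Fin n, 1 :=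
        Finset.sum_lt_sum (fun k _ => hone k) ⟨j, Finset.mem_univ j, hlt1⟩
      simp [hs] at this
    exact hnc ⟨1, hall⟩

theorem image_NSet_second_iterate (n : ℕ) (hn : 4 ≤ n) :
    (countOp n)^[2] '' NSet n
        = {x ∈ countOp n '' NSet n | ∑ j : Fin n, (j : ℕ) * x j = n} ∧
    (countOp n)^[2] '' NSet n
        = {x ∈ NSet n | ∑ j : Fin n, x j = n ∧ ∑ j : Fin n, (j : ℕ) * x j = n} := by
  have hC : (countOp n)^[2] '' NSet n
      = {x ∈ NSet n | ∑ j : Fin n, x j = n ∧ ∑ j : Fin n, (j : ℕ) * x j = n} := by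
    ext y
    constructor
    · rintro ⟨x, hx, rfl⟩
      simp only [Function.iterate_succ, Function.iterate_zero, Function.comp_apply, id_eq]
      have h1 : countOp n x ∈ NSet n := countOp_mem_NSet n hn hx
      have h2 : countOp n (countOp n x) ∈ NSet n := countOp_mem_NSet n hn h1
      refine ⟨h2, sum_countOp n _ h1.1, ?_⟩
      rw [wsum_countOp n _ h1.1]
      exact sum_countOp n x hx.1
    · rintro ⟨hy, hs, hws⟩
      obtain ⟨x, hxN, hx⟩ := exists_preimage_NSet n hn hy hs
      have hxs : ∑ j : Fin n, x j = n := by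
        rw [← wsum_countOp n x hxN.1, hx]
        exact hws
      obtain ⟨w, hwN, hwx⟩ := exists_preimage_NSet n hn hxN hxs
      exact ⟨w, hwN, by simp [Function.iterate_succ, hwx, hx]⟩
  refine ⟨?_, hC⟩
  rw [hC]
  ext y
  simp only [Set.mem_setOf_eq, Set.mem_image]
  constructor
  · rintro ⟨hy, hs, hws⟩
    have : y ∈ {x ∈ NSet n | ∑ j : Fin n, x j = n ∧ ∑ j : Fin n, (j : ℕ) * x j = n} :=
      ⟨hy, hs, hws⟩
    rw [← hC] at this
    obtain ⟨w, hwN, hw⟩ := this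
    refine ⟨⟨countOp n w, countOp_mem_NSet n hn hwN, ?_⟩, hws⟩
    rw [← hw]; simp [Function.iterate_succ]
  · rintro ⟨⟨x, hxN, rfl⟩, hws⟩
    have h1 : countOp n x ∈ NSet n := countOp_mem_NSet n hn hxN
    exact ⟨h1, sum_countOp n x hxN.1, hws⟩
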